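/- arXiv:1805.05273 — 7 statements merged into one kernel-verified Lean document; each statement's English description precedes it below -/
import Mathlib

section
/- For finite simple graphs G_1 and G_2 and any vertex (u,v) of the Cartesian product G_1 × G_2, one has δ_{G_1 × G_2}(u,v) = δ_{G_1}(u) + δ_{G_2}(v) + 2·deg_{G_1}(u)·deg_{G_2}(v). -/
open Finset
open scoped Classical

/-- Sum of degrees of the neighbours of a vertex: `δ_G(v) = ∑_{u ∈ N_G(v)} deg_G(u)`. -/
noncomputable def neighborDegSum {V : Type*} [Fintype V] (G : SimpleGraph V) (v : V) : ℕ :=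
  ∑ u ∈ G.neighborFinset v, G.degree u

theorem neighborDegSum_boxProd {V W : Type*} [Fintype V] [Fintype W]
    (G₁ : SimpleGraph V) (G₂ : SimpleGraph W) (u : V) (v : W) :
    neighborDegSum (G₁ □ G₂) (u, v) =
      neighborDegSum G₁ u + neighborDegSum G₂ v + 2 * G₁.degree u * G₂.degree v := by
  unfold neighborDegSum
  rw [SimpleGraph.neighborFinset_boxProd, Finset.sum_disjUnion,
    Finset.sum_product, Finset.sum_product]
  simp only [Finset.sum_singleton, SimpleGraph.degree_boxProd]
  rw [Finset.sum_add_distrib, Finset.sum_add_distrib,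
    Finset.sum_congr rfl (fun x _ => rfl : ∀ x ∈ G₁.neighborFinset u, _ = G₂.degree v),
    Finset.sum_congr rfl (fun x _ => rfl : ∀ x ∈ G₂.neighborFinset v, _ = G₁.degree u), Finset.sum_const,
    Finset.sum_const, ← SimpleGraph.degree, ← SimpleGraph.degree]
  ring
end

section
/- For finite simple graphs G_1 and G_2, the Neighbourhood Zagreb index of their Cartesian product satisfies M_N(G_1 × G_2) = 6·M_1(G_1)·M_1(G_2) + |V_2|·M_N(G_1) + |V_1|·M_N(G_2) + 16·(|E_2|·M_2(G_1) + |E_1|·M_2(G_2)). -/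
open Finset
open scoped Classical

/-- The first Zagreb index `M₁(G) = ∑_{v ∈ V(G)} deg_G(v)²`. -/
noncomputable def firstZagreb {V : Type*} [Fintype V] (G : SimpleGraph V) : ℕ :=
  ∑ v, (G.degree v) ^ 2

/-- The second Zagreb index `M₂(G) = ∑_{uv ∈ E(G)} deg_G(u)·deg_G(v)`,
the sum running over the edges of `G`. -/
noncomputable def secondZagreb {V : Type*} [Fintype V] (G : SimpleGraph V) : ℕ :=
  ∑ e ∈ G.edgeFinset,
    Sym2.lift ⟨fun u w => G.degree u * G.degree w, fun _ _ => mul_comm _ _⟩ e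

/-- The Neighbourhood Zagreb index `M_N(G) = ∑_{v ∈ V(G)} δ_G(v)²`. -/
noncomputable def neighborhoodZagreb {V : Type*} [Fintype V] (G : SimpleGraph V) : ℕ :=
  ∑ v, (neighborDegSum G v) ^ 2

section Aux

variable {V : Type*} [Fintype V] (G : SimpleGraph V)

private lemma sum_adj_pairs (F : V → V → ℕ) :
    ∑ p ∈ Finset.univ.filter (fun p : V × V => G.Adj p.1 p.2), F p.1 p.2
      = ∑ v, ∑ u ∈ G.neighborFinset v, F v u := by
  rw [Finset.sum_filter, ← Finset.univ_product_univ, Finset.sum_product]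
  refine Finset.sum_congr rfl fun v _ => ?_
  rw [SimpleGraph.neighborFinset_eq_filter, Finset.sum_filter]

private lemma sum_nbhd_comm (F : V → V → ℕ) :
    ∑ v, ∑ u ∈ G.neighborFinset v, F v u = ∑ v, ∑ u ∈ G.neighborFinset v, F u v := by
  simp only [SimpleGraph.neighborFinset_eq_filter, Finset.sum_filter]
  rw [Finset.sum_comm]
  exact Finset.sum_congr rfl fun x _ => Finset.sum_congr rfl fun y _ => by rw [G.adj_comm]

private lemma two_mul_secondZagreb :
    2 * secondZagreb G = ∑ v, G.degree v * neighborDegSum G v := by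
  rw [secondZagreb, Finset.mul_sum]
  simp only [neighborDegSum, Finset.mul_sum]
  rw [← sum_adj_pairs G (fun v u => G.degree v * G.degree u)]
  rw [← Finset.sum_fiberwise_of_maps_to (g := fun p : V × V => Sym2.mk p.1 p.2) (t := G.edgeFinset)
    (fun p hp => by
      simp only [Finset.mem_filter, Finset.mem_univ, true_and] at hp
      simpa [SimpleGraph.mem_edgeFinset] using hp)]
  refine Finset.sum_congr rfl fun e he => ?_
  induction e with
  | _ a b =>
    rw [SimpleGraph.mem_edgeFinset, SimpleGraph.mem_edgeSet] at he
    have hfib : (Finset.univ.filter (fun p : V × V => G.Adj p.1 p.2)).filter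
        (fun p => Sym2.mk p.1 p.2 = s(a, b)) = {(a, b), (b, a)} := by
      ext ⟨x, y⟩
      constructor
      · intro h
        simp only [Finset.mem_filter, Finset.mem_univ, true_and] at h
        rcases Sym2.eq_iff.mp h.2 with ⟨rfl, rfl⟩ | ⟨rfl, rfl⟩ <;> simp
      · intro h
        simp only [Finset.mem_insert, Finset.mem_singleton, Prod.mk.injEq] at h
        rcases h with ⟨rfl, rfl⟩ | ⟨rfl, rfl⟩ <;>
          simp [he, he.symm, Sym2.eq_swap]
    rw [hfib, Finset.sum_pair (by simp [he.ne, Prod.ext_iff] : ((a,b) : V × V) ≠ (b,a))]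
    simp [Sym2.lift_mk]
    ring

private lemma sum_neighborDegSum : ∑ v, neighborDegSum G v = firstZagreb G := by
  simp only [neighborDegSum, firstZagreb]
  rw [sum_nbhd_comm G (fun _ u => G.degree u)]
  refine Finset.sum_congr rfl fun v _ => ?_
  rw [Finset.sum_const, smul_eq_mul, pow_two, SimpleGraph.degree]

private lemma expand_sum {W : Type*} [Fintype W] (a c : V → ℕ) (b e : W → ℕ) :
    ∑ u, ∑ v, (a u + b v + 2 * (c u * e v)) ^ 2 =
      Fintype.card W * (∑ u, (a u) ^ 2) + Fintype.card V * (∑ v, (b v) ^ 2)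
      + 4 * ((∑ u, (c u) ^ 2) * (∑ v, (e v) ^ 2))
      + 2 * ((∑ u, a u) * (∑ v, b v))
      + 4 * ((∑ u, c u * a u) * (∑ v, e v))
      + 4 * ((∑ u, c u) * (∑ v, e v * b v)) := by
  have h : ∀ u v, (a u + b v + 2 * (c u * e v)) ^ 2 =
      a u ^ 2 + b v ^ 2 + 4 * (c u ^ 2 * e v ^ 2) + 2 * (a u * b v)
        + 4 * (c u * a u * e v) + 4 * (c u * (e v * b v)) := fun u v => by ring
  simp only [h, Finset.sum_add_distrib, ← Finset.mul_sum, ← Finset.sum_mul,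
    Finset.sum_const, smul_eq_mul, Finset.card_univ]

private lemma nds_boxProd {W : Type*} [Fintype W] (G₁ : SimpleGraph V) (G₂ : SimpleGraph W)
    (u : V) (v : W) :
    neighborDegSum (G₁ □ G₂) (u, v) =
      neighborDegSum G₁ u + neighborDegSum G₂ v + 2 * (G₁.degree u * G₂.degree v) := by
  rw [neighborDegSum, SimpleGraph.neighborFinset_boxProd, Finset.sum_disjUnion,
    Finset.sum_product, Finset.sum_product]
  have hdeg : ∀ a b {_ : Fintype ((G₁ □ G₂).neighborSet (a, b))},
      (G₁ □ G₂).degree (a, b) = G₁.degree a + G₂.degree b :=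
    fun a b _ => by convert SimpleGraph.degree_boxProd (G := G₁) (H := G₂) (a, b)
  simp only [Finset.sum_singleton, hdeg]
  rw [Finset.sum_add_distrib, Finset.sum_add_distrib, Finset.sum_const, Finset.sum_const,
    smul_eq_mul, smul_eq_mul]
  simp only [neighborDegSum]
  have h1 : #(G₁.neighborFinset u) = G₁.degree u := rfl
  have h2 : #(G₂.neighborFinset v) = G₂.degree v := rfl
  rw [h1, h2]
  ring

end Aux

set_option maxHeartbeats 1600000 in
theorem neighborhoodZagreb_boxProd {V W : Type*} [Fintype V] [Fintype W]
    (G₁ : SimpleGraph V) (G₂ : SimpleGraph W) :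
    neighborhoodZagreb (G₁ □ G₂) =
      6 * firstZagreb G₁ * firstZagreb G₂ +
      Fintype.card W * neighborhoodZagreb G₁ + Fintype.card V * neighborhoodZagreb G₂ +
      16 * (G₂.edgeFinset.card * secondZagreb G₁ + G₁.edgeFinset.card * secondZagreb G₂) := by
  have hE₁ : ∑ v, G₁.degree v = 2 * G₁.edgeFinset.card :=
    G₁.sum_degrees_eq_twice_card_edges
  have hE₂ : ∑ v, G₂.degree v = 2 * G₂.edgeFinset.card :=
    G₂.sum_degrees_eq_twice_card_edges
  rw [neighborhoodZagreb, Fintype.sum_prod_type]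
  calc ∑ u, ∑ v, (neighborDegSum (G₁ □ G₂) (u, v)) ^ 2
      = ∑ u, ∑ v, (neighborDegSum G₁ u + neighborDegSum G₂ v
          + 2 * (G₁.degree u * G₂.degree v)) ^ 2 := by
        refine Finset.sum_congr rfl fun u _ => Finset.sum_congr rfl fun v _ => ?_
        rw [nds_boxProd]
    _ = Fintype.card W * (∑ u, (neighborDegSum G₁ u) ^ 2)
        + Fintype.card V * (∑ v, (neighborDegSum G₂ v) ^ 2)
        + 4 * ((∑ u, (G₁.degree u) ^ 2) * (∑ v, (G₂.degree v) ^ 2))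
        + 2 * ((∑ u, neighborDegSum G₁ u) * (∑ v, neighborDegSum G₂ v))
        + 4 * ((∑ u, G₁.degree u * neighborDegSum G₁ u) * (∑ v, G₂.degree v))
        + 4 * ((∑ u, G₁.degree u) * (∑ v, G₂.degree v * neighborDegSum G₂ v)) :=
      expand_sum (neighborDegSum G₁) (fun u => G₁.degree u) (neighborDegSum G₂) (fun v => G₂.degree v)
    _ = _ := by
        rw [sum_neighborDegSum, sum_neighborDegSum, ← two_mul_secondZagreb,
          ← two_mul_secondZagreb, hE₁, hE₂]
        rw [show (∑ u, (neighborDegSum G₁ u) ^ 2) = neighborhoodZagreb G₁ from rfl,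
          show (∑ v, (neighborDegSum G₂ v) ^ 2) = neighborhoodZagreb G₂ from rfl,
          show (∑ u, (G₁.degree u) ^ 2) = firstZagreb G₁ from rfl,
          show (∑ v, (G₂.degree v) ^ 2) = firstZagreb G₂ from rfl]
        ring
end

section
/- For every integer n ≥ 3, the Neighbourhood Zagreb index of the ladder graph L_n = P_2 × P_{n+1} equals 162n − 130. -/
open Finset
open scoped Classical

/-- The ladder graph `L_n = P₂ × P_{n+1}`. -/
noncomputable def ladderGraph (n : ℕ) : SimpleGraph (Fin 2 × Fin (n + 1)) :=
  SimpleGraph.pathGraph 2 □ SimpleGraph.pathGraph (n + 1)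

/-! Auxiliary lemmas -/

lemma pathNF_zero (n : ℕ) (hn : 1 ≤ n) (j : Fin (n+1)) (h : j.val = 0) :
    (SimpleGraph.pathGraph (n+1)).neighborFinset j = {⟨1, by omega⟩} := by
  ext u
  simp only [SimpleGraph.mem_neighborFinset, SimpleGraph.pathGraph_adj, Finset.mem_singleton,
    Fin.ext_iff]
  omega

lemma pathNF_last (n : ℕ) (hn : 1 ≤ n) (j : Fin (n+1)) (h : j.val = n) :
    (SimpleGraph.pathGraph (n+1)).neighborFinset j = {⟨n-1, by omega⟩} := by
  ext u
  simp only [SimpleGraph.mem_neighborFinset, SimpleGraph.pathGraph_adj, Finset.mem_singleton,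
    Fin.ext_iff]
  omega

lemma pathNF_mid (n : ℕ) (j : Fin (n+1)) (h0 : j.val ≠ 0) (hn : j.val ≠ n) :
    (SimpleGraph.pathGraph (n+1)).neighborFinset j =
      {⟨j.val - 1, by omega⟩, ⟨j.val + 1, by omega⟩} := by
  ext u
  simp only [SimpleGraph.mem_neighborFinset, SimpleGraph.pathGraph_adj, Finset.mem_insert,
    Finset.mem_singleton, Fin.ext_iff]
  omega

lemma path_degree (n : ℕ) (hn : 1 ≤ n) (j : Fin (n+1)) :
    (SimpleGraph.pathGraph (n+1)).degree j = if j.val = 0 ∨ j.val = n then 1 else 2 := by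
  rw [SimpleGraph.degree]
  by_cases h0 : j.val = 0
  · rw [pathNF_zero n hn j h0, Finset.card_singleton]
    split_ifs with h <;> omega
  · by_cases h1 : j.val = n
    · rw [pathNF_last n hn j h1, Finset.card_singleton]
      split_ifs with h <;> omega
    · rw [pathNF_mid n j h0 h1,
        Finset.card_insert_of_notMem
          (by simp only [Finset.mem_singleton, Fin.ext_iff]; omega),
        Finset.card_singleton]
      split_ifs with h <;> omega

lemma path2_degree (j : Fin 2) : (SimpleGraph.pathGraph 2).degree j = 1 := by
  rw [path_degree 1 le_rfl j]
  split_ifs with h <;> omega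

lemma path_nds (n : ℕ) (hn : 3 ≤ n) (j : Fin (n+1)) :
    neighborDegSum (SimpleGraph.pathGraph (n+1)) j =
      if j.val = 0 ∨ j.val = n then 2 else if j.val = 1 ∨ j.val = n - 1 then 3 else 4 := by
  have hn1 : 1 ≤ n := by omega
  rw [neighborDegSum]
  by_cases h0 : j.val = 0
  · rw [pathNF_zero n hn1 j h0, Finset.sum_singleton, path_degree n hn1]
    simp only [Fin.val_mk]
    split_ifs <;> (try simp_all) <;> omega
  · by_cases h1 : j.val = n
    · rw [pathNF_last n hn1 j h1, Finset.sum_singleton, path_degree n hn1]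
      simp only [Fin.val_mk]
      split_ifs <;> (try simp_all) <;> omega
    · rw [pathNF_mid n j h0 h1,
        Finset.sum_insert (by simp only [Finset.mem_singleton, Fin.ext_iff]; omega),
        Finset.sum_singleton, path_degree n hn1, path_degree n hn1]
      simp only [Fin.val_mk]
      have hj1 : 1 ≤ j.val := by omega
      split_ifs <;> (try simp_all) <;> omega

lemma path2_nds (j : Fin 2) : neighborDegSum (SimpleGraph.pathGraph 2) j = 1 := by
  rw [neighborDegSum]
  by_cases h0 : j.val = 0
  · rw [pathNF_zero 1 le_rfl j h0, Finset.sum_singleton, path2_degree]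
  · have h1 : j.val = 1 := by omega
    rw [pathNF_last 1 le_rfl j h1, Finset.sum_singleton, path2_degree]

lemma boxProd_nds (n m : ℕ) (G : SimpleGraph (Fin m)) (H : SimpleGraph (Fin (n+1)))
    (v : Fin m × Fin (n+1)) :
    neighborDegSum (G □ H) v =
      neighborDegSum G v.1 + G.degree v.1 * H.degree v.2
      + (H.degree v.2 * G.degree v.1 + neighborDegSum H v.2) := by
  rw [neighborDegSum, SimpleGraph.neighborFinset_boxProd, Finset.sum_disjUnion,
    Finset.sum_product, Finset.sum_product]
  simp only [Finset.sum_singleton, SimpleGraph.degree_boxProd]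
  rw [Finset.sum_add_distrib, Finset.sum_add_distrib]
  congr 1 <;> congr 1
  · rw [← SimpleGraph.card_neighborFinset_eq_degree G, Finset.card_eq_sum_ones, Finset.sum_mul,
      one_mul]
  · rw [← SimpleGraph.card_neighborFinset_eq_degree H, Finset.card_eq_sum_ones, Finset.sum_mul,
      one_mul]

lemma ladder_nds (n : ℕ) (hn : 3 ≤ n) (v : Fin 2 × Fin (n+1)) :
    neighborDegSum (ladderGraph n) v =
      if v.2.val = 0 ∨ v.2.val = n then 5
      else if v.2.val = 1 ∨ v.2.val = n - 1 then 8 else 9 := by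
  rw [ladderGraph, boxProd_nds, path2_nds, path2_degree, path_nds n hn, path_degree n (by omega)]
  split_ifs <;> omega

theorem neighborhoodZagreb_ladderGraph (n : ℕ) (hn : 3 ≤ n) :
    (neighborhoodZagreb (ladderGraph n) : ℤ) = 162 * n - 130 := by
  have hiter : ∀ x : Fin 2, (∑ y : Fin (n+1),
      ((if y.val = 0 ∨ y.val = n then 5
        else if y.val = 1 ∨ y.val = n - 1 then 8 else 9) : ℕ) ^ 2) = 81 * n - 65 := by
    intro x
    rw [Fin.sum_univ_eq_sum_range
      (fun k => ((if k = 0 ∨ k = n then 5 else if k = 1 ∨ k = n - 1 then 8 else 9) : ℕ) ^ 2)]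
    have step : ∀ k ∈ Finset.range (n+1),
        ((if k = 0 ∨ k = n then 5 else if k = 1 ∨ k = n - 1 then 8 else 9) : ℕ) ^ 2
        + ((if k = 0 then 56 else 0) + (if k = n then 56 else 0)
            + ((if k = 1 then 17 else 0) + (if k = n - 1 then 17 else 0))) = 81 := by
      intro k _
      split_ifs <;> omega
    have key := Finset.sum_congr rfl step
    rw [Finset.sum_add_distrib, Finset.sum_const, Finset.card_range,
      Finset.sum_add_distrib, Finset.sum_add_distrib, Finset.sum_add_distrib,
      Finset.sum_ite_eq' (Finset.range (n+1)) 0 (fun _ => (56:ℕ)),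
      Finset.sum_ite_eq' (Finset.range (n+1)) n (fun _ => (56:ℕ)),
      Finset.sum_ite_eq' (Finset.range (n+1)) 1 (fun _ => (17:ℕ)),
      Finset.sum_ite_eq' (Finset.range (n+1)) (n-1) (fun _ => (17:ℕ)), smul_eq_mul] at key
    have m0 : (0:ℕ) ∈ Finset.range (n+1) := by simp
    have m1 : (1:ℕ) ∈ Finset.range (n+1) := by simp only [Finset.mem_range]; omega
    have m2 : n ∈ Finset.range (n+1) := by simp
    have m3 : n - 1 ∈ Finset.range (n+1) := by simp only [Finset.mem_range]; omega
    rw [if_pos m0, if_pos m2, if_pos m1, if_pos m3] at key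
    omega
  have hnat : neighborhoodZagreb (ladderGraph n) = 2 * (81 * n - 65) := by
    rw [neighborhoodZagreb]
    calc (∑ v : Fin 2 × Fin (n+1), (neighborDegSum (ladderGraph n) v) ^ 2)
        = ∑ x : Fin 2, ∑ y : Fin (n+1),
            ((if y.val = 0 ∨ y.val = n then 5
              else if y.val = 1 ∨ y.val = n - 1 then 8 else 9) : ℕ) ^ 2 := by
          rw [Fintype.sum_prod_type]
          exact Finset.sum_congr rfl fun x _ =>
            Finset.sum_congr rfl fun y _ => by rw [ladder_nds n hn (x, y)]
      _ = ∑ _x : Fin 2, (81 * n - 65) := Finset.sum_congr rfl fun x _ => hiter x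
      _ = 2 * (81 * n - 65) := by
          rw [Finset.sum_const, Finset.card_univ, Fintype.card_fin, smul_eq_mul]
  rw [hnat]
  have h65 : (65:ℕ) ≤ 81 * n := by omega
  push_cast [Nat.cast_sub h65]
  ring
end

section
/- For all integers m, n ≥ 4, the Neighbourhood Zagreb index of the grid graph P_n × P_m equals 256mn − 374m − 374n + 472. -/
open Finset
open scoped Classical

namespace NZaux

open SimpleGraph

/-- Value of the degree of vertex `k` in the path graph `P_n` (as an integer). -/
def pdeg (n k : ℕ) : ℤ := if k = 0 ∨ k = n-1 then 1 else 2

/-- Value of `δ` at vertex `k` in the path graph `P_n` (as an integer). -/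
def pnds (n k : ℕ) : ℤ := if k = 0 ∨ k = n-1 then 2 else if k = 1 ∨ k = n-2 then 3 else 4

lemma sumA {n : ℕ} (k : ℕ) (g : Fin n → ℤ) :
    ∑ j : Fin n, (if (j:ℕ) = k then g j else 0) = if h : k < n then g ⟨k, h⟩ else 0 := by
  split
  · next h =>
    rw [Finset.sum_eq_single (⟨k, h⟩ : Fin n)]
    · simp
    · intro j _ hj; rw [if_neg]; simpa [Fin.ext_iff] using hj
    · simp
  · next h => exact Finset.sum_eq_zero fun j _ => by rw [if_neg]; omega

lemma sum_nbr {n : ℕ} (i : Fin n) (g : Fin n → ℤ) :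
    ∑ j ∈ (pathGraph n).neighborFinset i, g j =
      (if h : (i:ℕ)+1 < n then g ⟨(i:ℕ)+1, h⟩ else 0) +
      (if _h : (i:ℕ) ≠ 0 then g ⟨(i:ℕ)-1, by omega⟩ else 0) := by
  rw [neighborFinset_eq_filter, Finset.sum_filter]
  have step : ∀ j : Fin n, (if (pathGraph n).Adj i j then g j else 0) =
      (if (j:ℕ) = (i:ℕ)+1 then g j else 0) +
      (if (j:ℕ)+1 = (i:ℕ) then g j else 0) := by
    intro j
    rw [pathGraph_adj]
    split_ifs <;> (first | (exfalso; omega) | ring)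
  rw [Finset.sum_congr rfl fun j _ => step j, Finset.sum_add_distrib, sumA]
  congr 1
  by_cases h0 : (i:ℕ) = 0
  · rw [dif_neg (by omega)]
    exact Finset.sum_eq_zero fun j _ => by rw [if_neg]; omega
  · have : ∀ j : Fin n, (if (j:ℕ)+1 = (i:ℕ) then g j else 0) =
        (if (j:ℕ) = (i:ℕ)-1 then g j else 0) := by
      intro j; split_ifs <;> (first | (exfalso; omega) | rfl)
    rw [Finset.sum_congr rfl fun j _ => this j, sumA, dif_pos h0, dif_pos (by omega : (i:ℕ)-1 < n)]

lemma deg_path {n : ℕ} (hn : 2 ≤ n) (i : Fin n) :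
    ((pathGraph n).degree i : ℤ) = pdeg n i := by
  have hi := i.isLt
  calc ((pathGraph n).degree i : ℤ) = ∑ j ∈ (pathGraph n).neighborFinset i, (1:ℤ) := by
        rw [SimpleGraph.degree, Finset.card_eq_sum_ones]; push_cast; ring
    _ = _ := sum_nbr i _
    _ = pdeg n i := by
        unfold pdeg
        split_ifs <;> simp -failIfUnchanged only [false_or] at * <;> omega

lemma nds_path {n : ℕ} (hn : 4 ≤ n) (i : Fin n) :
    ((neighborDegSum (pathGraph n) i : ℤ)) = pnds n i := by
  have hi := i.isLt
  calc ((neighborDegSum (pathGraph n) i : ℤ))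
      = ∑ j ∈ (pathGraph n).neighborFinset i, ((pathGraph n).degree j : ℤ) := by
        rw [neighborDegSum]; push_cast; rfl
    _ = ∑ j ∈ (pathGraph n).neighborFinset i, pdeg n j :=
        Finset.sum_congr rfl fun j _ => deg_path (by omega) j
    _ = _ := sum_nbr i _
    _ = pnds n i := by
        unfold pdeg pnds
        simp only [Fin.val_mk]
        split_ifs <;> simp -failIfUnchanged only [false_or] at * <;> omega

lemma sum_class {n : ℕ} (hn : 4 ≤ n) (a b c : ℤ) :
    ∑ i : Fin n, (if (i:ℕ) = 0 ∨ (i:ℕ) = n-1 then a else if (i:ℕ) = 1 ∨ (i:ℕ) = n-2 then b else c)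
      = c * n + 2*(a-c) + 2*(b-c) := by
  have step : ∀ i : Fin n,
      (if (i:ℕ) = 0 ∨ (i:ℕ) = n-1 then a else if (i:ℕ) = 1 ∨ (i:ℕ) = n-2 then b else c)
      = c + (if (i:ℕ) = 0 then a-c else 0) + (if (i:ℕ) = n-1 then a-c else 0)
          + (if (i:ℕ) = 1 then b-c else 0) + (if (i:ℕ) = n-2 then b-c else 0) := by
    intro i
    have hi := i.isLt
    split_ifs <;> (first | (exfalso; omega) | ring)
  rw [Finset.sum_congr rfl fun i _ => step i]
  simp only [Finset.sum_add_distrib, sumA, Finset.sum_const, Finset.card_univ, Fintype.card_fin]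
  rw [dif_pos (by omega : 0 < n), dif_pos (by omega : n-1 < n), dif_pos (by omega : 1 < n),
    dif_pos (by omega : n-2 < n)]
  ring

lemma class_form {n : ℕ} (hn : 4 ≤ n) (F : ℕ → ℤ) (a b c : ℤ)
    (h0 : ∀ k, k = 0 ∨ k = n-1 → F k = a)
    (h1 : ∀ k, ¬(k = 0 ∨ k = n-1) → (k = 1 ∨ k = n-2) → F k = b)
    (h2 : ∀ k, ¬(k = 0 ∨ k = n-1) → ¬(k = 1 ∨ k = n-2) → F k = c) :
    ∑ i : Fin n, F i = c * n + 2*(a-c) + 2*(b-c) := by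
  rw [show ∑ i : Fin n, F i = ∑ i : Fin n,
      (if (i:ℕ) = 0 ∨ (i:ℕ) = n-1 then a else if (i:ℕ) = 1 ∨ (i:ℕ) = n-2 then b else c) from
    Finset.sum_congr rfl fun i _ => by
      split_ifs with q1 q2
      · exact h0 _ q1
      · exact h1 _ q1 q2
      · exact h2 _ q1 q2]
  exact sum_class hn a b c

lemma sum_pnds {n : ℕ} (hn : 4 ≤ n) : ∑ i : Fin n, pnds n i = 4*n - 6 := by
  have := class_form hn (pnds n) 2 3 4
    (fun k hk => by unfold pnds; rw [if_pos hk])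
    (fun k hk hk' => by unfold pnds; rw [if_neg hk, if_pos hk'])
    (fun k hk hk' => by unfold pnds; rw [if_neg hk, if_neg hk'])
  rw [this]; ring

lemma sum_pnds_sq {n : ℕ} (hn : 4 ≤ n) : ∑ i : Fin n, (pnds n i)^2 = 16*n - 38 := by
  have := class_form hn (fun k => (pnds n k)^2) 4 9 16
    (fun k hk => by simp only [pnds, pdeg]; rw [if_pos hk]; norm_num)
    (fun k hk hk' => by simp only [pnds, pdeg]; rw [if_neg hk, if_pos hk']; norm_num)
    (fun k hk hk' => by simp only [pnds, pdeg]; rw [if_neg hk, if_neg hk']; norm_num)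
  rw [this]; ring

lemma sum_pdeg {n : ℕ} (hn : 4 ≤ n) : ∑ i : Fin n, pdeg n i = 2*n - 2 := by
  have := class_form hn (pdeg n) 1 2 2
    (fun k hk => by unfold pdeg; rw [if_pos hk])
    (fun k hk _ => by unfold pdeg; rw [if_neg hk])
    (fun k hk _ => by unfold pdeg; rw [if_neg hk])
  rw [this]; ring

lemma sum_pdeg_sq {n : ℕ} (hn : 4 ≤ n) : ∑ i : Fin n, (pdeg n i)^2 = 4*n - 6 := by
  have := class_form hn (fun k => (pdeg n k)^2) 1 4 4
    (fun k hk => by simp only [pnds, pdeg]; rw [if_pos hk]; norm_num)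
    (fun k hk _ => by simp only [pnds, pdeg]; rw [if_neg hk]; norm_num)
    (fun k hk _ => by simp only [pnds, pdeg]; rw [if_neg hk]; norm_num)
  rw [this]; ring

lemma sum_mix {n : ℕ} (hn : 4 ≤ n) : ∑ i : Fin n, pnds n i * pdeg n i = 8*n - 16 := by
  have := class_form hn (fun k => pnds n k * pdeg n k) 2 6 8
    (fun k hk => by simp only [pnds, pdeg]; rw [if_pos hk, if_pos hk]; norm_num)
    (fun k hk hk' => by simp only [pnds, pdeg]; rw [if_neg hk, if_pos hk', if_neg hk]; norm_num)
    (fun k hk hk' => by simp only [pnds, pdeg]; rw [if_neg hk, if_neg hk', if_neg hk]; norm_num)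
  rw [this]; ring

lemma nds_box {α β : Type*} [Fintype α] [Fintype β] (G : SimpleGraph α) (H : SimpleGraph β)
    (x : α) (y : β) :
    neighborDegSum (G □ H) (x, y) =
      neighborDegSum G x + neighborDegSum H y + 2 * (G.degree x * H.degree y) := by
  rw [neighborDegSum, SimpleGraph.neighborFinset_boxProd, Finset.sum_disjUnion]
  dsimp only
  have hd : ∀ a b (i : Fintype ((G □ H).neighborSet (a, b))),
      @SimpleGraph.degree _ (G □ H) (a, b) i = G.degree a + H.degree b :=
    fun a b _ => degree_boxProd (a, b)
  simp only [Finset.sum_product, Finset.sum_singleton, hd]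
  rw [Finset.sum_add_distrib, Finset.sum_add_distrib]
  show ∑ a ∈ G.neighborFinset x, G.degree a + ∑ _a ∈ G.neighborFinset x, H.degree y +
    (∑ _b ∈ H.neighborFinset y, G.degree x + ∑ b ∈ H.neighborFinset y, H.degree b) = _
  rw [Finset.sum_const, Finset.sum_const,
    ← SimpleGraph.degree, ← SimpleGraph.degree, neighborDegSum, neighborDegSum, smul_eq_mul]
  ring

end NZaux

open NZaux SimpleGraph

theorem neighborhoodZagreb_grid (m n : ℕ) (hm : 4 ≤ m) (hn : 4 ≤ n) :
    (neighborhoodZagreb (SimpleGraph.pathGraph n □ SimpleGraph.pathGraph m) : ℤ) =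
      256 * m * n - 374 * m - 374 * n + 472 := by
  have key : ∀ (x : Fin n) (y : Fin m),
      ((neighborDegSum (pathGraph n □ pathGraph m) (x, y) : ℤ)) =
        pnds n x + pnds m y + 2 * (pdeg n x * pdeg m y) := by
    intro x y
    rw [nds_box]
    push_cast
    rw [nds_path hn x, nds_path hm y, deg_path (by omega) x, deg_path (by omega) y]
  have cast1 : (neighborhoodZagreb (pathGraph n □ pathGraph m) : ℤ) =
      ∑ v : Fin n × Fin m, ((neighborDegSum (pathGraph n □ pathGraph m) v : ℤ))^2 := by
    rw [neighborhoodZagreb]; push_cast; rfl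
  rw [cast1, Fintype.sum_prod_type]
  have inner : ∀ x : Fin n,
      ∑ y : Fin m, ((neighborDegSum (pathGraph n □ pathGraph m) (x, y) : ℤ))^2 =
        (m:ℤ) * (pnds n x)^2 + (4*(4*(m:ℤ)-6)) * (pdeg n x)^2 + (2*(4*(m:ℤ)-6)) * pnds n x
          + (4*(2*(m:ℤ)-2)) * (pnds n x * pdeg n x) + (4*(8*(m:ℤ)-16)) * pdeg n x
          + (16*(m:ℤ)-38) := by
    intro x
    calc ∑ y : Fin m, ((neighborDegSum (pathGraph n  □ pathGraph m) (x, y) : ℤ))^2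
        = ∑ y : Fin m, ((pnds n x)^2
            + (4*(pdeg n x)^2) * (pdeg m y)^2
            + (2 * pnds n x) * pnds m y
            + (4*(pnds n x * pdeg n x)) * pdeg m y
            + (4 * pdeg n x) * (pnds m y * pdeg m y)
            + (pnds m y)^2) :=
          Finset.sum_congr rfl fun y _ => by rw [key x y]; ring
      _ = _ := by
          simp only [Finset.sum_add_distrib, ← Finset.mul_sum, Finset.sum_const,
            Finset.card_univ, Fintype.card_fin, nsmul_eq_mul]
          rw [sum_pnds hm, sum_pnds_sq hm, sum_pdeg hm, sum_pdeg_sq hm, sum_mix hm]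
          ring
  rw [Finset.sum_congr rfl fun x _ => inner x]
  simp only [Finset.sum_add_distrib, ← Finset.mul_sum, Finset.sum_const,
    Finset.card_univ, Fintype.card_fin, nsmul_eq_mul]
  rw [sum_pnds hn, sum_pnds_sq hn, sum_pdeg hn, sum_pdeg_sq hn, sum_mix hn]
  ring
end

section
/- For all positive integers m and n, the Neighbourhood Zagreb index of the Rook's graph K_m × K_n equals mn·[6(m−1)^2(n−1)^2 + (n−1)^4 + (m−1)^4 + 4(m−1)(n−1)((m−1)^2 + (n−1)^2)]. -/
open Finset
open scoped Classical

/-- The degree does not depend on the choice of `Fintype` instance on the neighbour set. -/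
lemma degree_inst {V : Type*} [Fintype V] (G : SimpleGraph V) (v : V)
    (i1 i2 : Fintype (G.neighborSet v)) :
    @SimpleGraph.degree V G v i1 = @SimpleGraph.degree V G v i2 := by
  cases Subsingleton.elim i1 i2; rfl

/-- The Neighbourhood Zagreb index of a `d`-regular graph is `|V| * d⁴`. -/
lemma neighborhoodZagreb_regular {V : Type*} [Fintype V] (G : SimpleGraph V) (d : ℕ)
    (h : ∀ v, G.degree v = d) :
    neighborhoodZagreb G = Fintype.card V * (d * d) ^ 2 := by
  have hδ : ∀ v : V, neighborDegSum G v = d * d := by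
    intro v
    unfold neighborDegSum
    calc ∑ u ∈ G.neighborFinset v, G.degree u
        = ∑ _u ∈ G.neighborFinset v, d := Finset.sum_congr rfl fun u _ => h u
      _ = (G.neighborFinset v).card * d := by rw [Finset.sum_const, smul_eq_mul]
      _ = d * d := by rw [show (G.neighborFinset v).card = G.degree v from rfl, h v]
  unfold neighborhoodZagreb
  calc ∑ v : V, neighborDegSum G v ^ 2
      = ∑ _v : V, (d * d) ^ 2 := Finset.sum_congr rfl fun v _ => by rw [hδ v]
    _ = Fintype.card V * (d * d) ^ 2 := by
        rw [Finset.sum_const, smul_eq_mul, Finset.card_univ]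

theorem neighborhoodZagreb_rook (m n : ℕ) (hm : 1 ≤ m) (hn : 1 ≤ n) :
    (neighborhoodZagreb (SimpleGraph.completeGraph (Fin m) □ SimpleGraph.completeGraph (Fin n)) : ℤ) =
      m * n * (6 * (m - 1) ^ 2 * (n - 1) ^ 2 + (n - 1) ^ 4 + (m - 1) ^ 4 +
        4 * (m - 1) * (n - 1) * ((m - 1) ^ 2 + (n - 1) ^ 2)) := by
  have htop : ∀ (k : ℕ) (a : Fin k) (i : Fintype ((SimpleGraph.completeGraph (Fin k)).neighborSet a)),
      @SimpleGraph.degree _ (SimpleGraph.completeGraph (Fin k)) a i = k - 1 := by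
    intro k a i
    have h := SimpleGraph.complete_graph_degree (V := Fin k) a
    rw [Fintype.card_fin] at h
    exact (degree_inst _ _ _ _).trans h
  have hdeg : ∀ v : Fin m × Fin n,
      (SimpleGraph.completeGraph (Fin m) □ SimpleGraph.completeGraph (Fin n)).degree v = (m - 1) + (n - 1) := by
    intro v
    have h := SimpleGraph.degree_boxProd
      (G := SimpleGraph.completeGraph (Fin m)) (H := SimpleGraph.completeGraph (Fin n)) v
    rw [htop m v.1 _, htop n v.2 _] at h
    exact (degree_inst _ _ _ _).trans h
  have hreg := neighborhoodZagreb_regular (SimpleGraph.completeGraph (Fin m) □ SimpleGraph.completeGraph (Fin n))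
    ((m - 1) + (n - 1)) (fun v => (degree_inst _ _ _ _).trans (hdeg v))
  rw [Fintype.card_prod, Fintype.card_fin, Fintype.card_fin] at hreg
  rw [hreg]
  push_cast [Nat.cast_sub hm, Nat.cast_sub hn]
  ring
end

section
/- For finite simple graphs G_1 and G_2, the Neighbourhood Zagreb index of their tensor product satisfies M_N(G_1 ⊗ G_2) = M_N(G_1)·M_N(G_2). -/
open Finset
open scoped Classical

/-- The tensor product `G₁ ⊗ G₂`: `(u₁,v₁)` adjacent to `(u₂,v₂)` iff
`u₁u₂ ∈ E₁` and `v₁v₂ ∈ E₂`. -/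
def tensorProd {V W : Type*} (G₁ : SimpleGraph V) (G₂ : SimpleGraph W) :
    SimpleGraph (V × W) where
  Adj x y := G₁.Adj x.1 y.1 ∧ G₂.Adj x.2 y.2
  symm := ⟨fun _ _ h => ⟨h.1.symm, h.2.symm⟩⟩
  loopless := ⟨fun _ h => G₁.loopless.irrefl _ h.1⟩

lemma tensorProd_neighborFinset {V W : Type*} [Fintype V] [Fintype W]
    (G₁ : SimpleGraph V) (G₂ : SimpleGraph W) (x : V × W) :
    (tensorProd G₁ G₂).neighborFinset x =
      (G₁.neighborFinset x.1) ×ˢ (G₂.neighborFinset x.2) := by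
  ext ⟨a, b⟩
  simp only [SimpleGraph.mem_neighborFinset, Finset.mem_product]
  rfl

lemma tensorProd_degree {V W : Type*} [Fintype V] [Fintype W]
    (G₁ : SimpleGraph V) (G₂ : SimpleGraph W) (x : V × W) :
    (tensorProd G₁ G₂).degree x = G₁.degree x.1 * G₂.degree x.2 := by
  simp [← SimpleGraph.card_neighborFinset_eq_degree, tensorProd_neighborFinset]

lemma tensorProd_neighborDegSum {V W : Type*} [Fintype V] [Fintype W]
    (G₁ : SimpleGraph V) (G₂ : SimpleGraph W) (x : V × W) :
    neighborDegSum (tensorProd G₁ G₂) x =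
      neighborDegSum G₁ x.1 * neighborDegSum G₂ x.2 := by
  simp only [neighborDegSum, tensorProd_neighborFinset, Finset.sum_product,
    tensorProd_degree]
  rw [Finset.sum_mul]
  exact Finset.sum_congr rfl fun a _ => by rw [Finset.mul_sum]

theorem neighborhoodZagreb_tensorProd {V W : Type*} [Fintype V] [Fintype W]
    (G₁ : SimpleGraph V) (G₂ : SimpleGraph W) :
    neighborhoodZagreb (tensorProd G₁ G₂) =
      neighborhoodZagreb G₁ * neighborhoodZagreb G₂ := by
  simp only [neighborhoodZagreb, tensorProd_neighborDegSum, Fintype.sum_prod_type,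
    mul_pow, ← Finset.mul_sum, ← Finset.sum_mul]
end

section
/- For finite simple graphs G_1 and G_2 and any vertex (u,v) of the wreath product (composition) G_1[G_2], one has δ_{G_1[G_2]}(u,v) = |V_2|^2·δ_{G_1}(u) + δ_{G_2}(v) + 2|E_2|·deg_{G_1}(u) + |V_2|·deg_{G_1}(u)·deg_{G_2}(v). -/
open Finset
open scoped Classical

/-- The wreath product (composition) `G₁[G₂]`: `(u₁,v₁)` adjacent to `(u₂,v₂)` iff
`u₁u₂ ∈ E₁`, or (`u₁ = u₂` and `v₁v₂ ∈ E₂`). -/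
def wreathProd {V W : Type*} (G₁ : SimpleGraph V) (G₂ : SimpleGraph W) :
    SimpleGraph (V × W) where
  Adj x y := G₁.Adj x.1 y.1 ∨ (x.1 = y.1 ∧ G₂.Adj x.2 y.2)
  symm := by
    refine ⟨?_⟩
    rintro x y (h | ⟨h, h'⟩)
    · exact Or.inl (G₁.symm.symm _ _ h)
    · exact Or.inr ⟨h.symm, G₂.symm.symm _ _ h'⟩
  loopless := by
    refine ⟨?_⟩
    rintro x (h | ⟨-, h⟩)
    · exact G₁.loopless.irrefl _ h
    · exact G₂.loopless.irrefl _ h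

lemma wreath_neighborFinset {V W : Type*} [Fintype V] [Fintype W]
    (G₁ : SimpleGraph V) (G₂ : SimpleGraph W) (u : V) (v : W) :
    (wreathProd G₁ G₂).neighborFinset (u, v) =
      (G₁.neighborFinset u ×ˢ (univ : Finset W)) ∪ ({u} ×ˢ G₂.neighborFinset v) := by
  ext ⟨a, b⟩
  rw [SimpleGraph.mem_neighborFinset]
  simp only [SimpleGraph.mem_neighborFinset, wreathProd, Finset.mem_union,
    Finset.mem_product, Finset.mem_univ, Finset.mem_singleton, and_true, eq_comm]

lemma wreath_disj {V W : Type*} [Fintype V] [Fintype W]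
    (G₁ : SimpleGraph V) (G₂ : SimpleGraph W) (u : V) (v : W) :
    Disjoint (G₁.neighborFinset u ×ˢ (univ : Finset W)) ({u} ×ˢ G₂.neighborFinset v) := by
  rw [Finset.disjoint_left]
  rintro ⟨a, b⟩ h h'
  simp only [Finset.mem_product, Finset.mem_singleton, SimpleGraph.mem_neighborFinset] at h h'
  exact G₁.ne_of_adj h.1 h'.1.symm

lemma wreath_degree {V W : Type*} [Fintype V] [Fintype W]
    (G₁ : SimpleGraph V) (G₂ : SimpleGraph W) (u : V) (v : W) :
    (wreathProd G₁ G₂).degree (u, v) = Fintype.card W * G₁.degree u + G₂.degree v := by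
  rw [← SimpleGraph.card_neighborFinset_eq_degree, wreath_neighborFinset,
    Finset.card_union_of_disjoint (wreath_disj G₁ G₂ u v)]
  simp [SimpleGraph.card_neighborFinset_eq_degree, Nat.mul_comm]

theorem neighborDegSum_wreathProd {V W : Type*} [Fintype V] [Fintype W]
    (G₁ : SimpleGraph V) (G₂ : SimpleGraph W) (u : V) (v : W) :
    neighborDegSum (wreathProd G₁ G₂) (u, v) =
      (Fintype.card W) ^ 2 * neighborDegSum G₁ u + neighborDegSum G₂ v +
        2 * G₂.edgeFinset.card * G₁.degree u +
        Fintype.card W * G₁.degree u * G₂.degree v := by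
  have h2 : ∑ y : W, G₂.degree y = 2 * G₂.edgeFinset.card :=
    G₂.sum_degrees_eq_twice_card_edges
  unfold neighborDegSum
  rw [wreath_neighborFinset, Finset.sum_union (wreath_disj G₁ G₂ u v)]
  simp only [Finset.sum_product, wreath_degree, Finset.sum_singleton]
  rw [Finset.sum_congr rfl (fun x _ => Finset.sum_add_distrib),
      Finset.sum_add_distrib]
  simp only [Finset.sum_const, smul_eq_mul, h2]
  rw [Finset.sum_add_distrib, Finset.sum_const, smul_eq_mul]
  simp only [Finset.card_univ, SimpleGraph.card_neighborFinset_eq_degree]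
  have e1 : ∑ x ∈ G₁.neighborFinset u, Fintype.card W * (Fintype.card W * G₁.degree x)
      = Fintype.card W ^ 2 * ∑ x ∈ G₁.neighborFinset u, G₁.degree x := by
    rw [Finset.mul_sum]
    exact Finset.sum_congr rfl fun x _ => by ring
  rw [e1]
  ring
end
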